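/- Let 𝓛₀₁ be the set of all Borel probability measures on ℝ with mean 0 and variance 1, and let α∈(0,1). Then inf_{μ∈𝓛₀₁} ES_α(μ) = 0 and sup_{μ∈𝓛₀₁} ES_α(μ) = √((1-α)/α). -/

import Mathlib

open MeasureTheory Set

/-- The set of all Borel probability measures on ℝ with mean 0 and variance 1. -/
def stdMeasures : Set (Measure ℝ) :=
  {μ | IsProbabilityMeasure μ ∧ (∫ x, x ∂μ) = 0 ∧ (∫ x, x ^ 2 ∂μ) = 1}

/-- The distribution function of a measure: `F_μ(x) = μ((-∞, x])`. -/
noncomputable def distFun (μ : Measure ℝ) (x : ℝ) : ℝ := (μ (Iic x)).toReal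

/-- The lower quantile of order `α`: `q_α(μ) = inf {x : F_μ(x) ≥ α}`. -/
noncomputable def lowerQuantile (μ : Measure ℝ) (α : ℝ) : ℝ :=
  sInf {x : ℝ | α ≤ distFun μ x}

/-- The Value-at-Risk of order `α`: `VaR_α(μ) = -q_α(μ)`. -/
noncomputable def VaR (μ : Measure ℝ) (α : ℝ) : ℝ := - lowerQuantile μ α

/-- The Expected Shortfall of order `α`: `ES_α(μ) = (1/α) ∫₀^α VaR_u(μ) du`. -/
noncomputable def ES (μ : Measure ℝ) (α : ℝ) : ℝ :=
  (1 / α) * ∫ u in (0 : ℝ)..α, VaR μ u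

open Filter Topology ProbabilityTheory

section Aux

variable {μ : Measure ℝ} [IsProbabilityMeasure μ]

lemma distFun_eq_cdf (x : ℝ) : distFun μ x = cdf μ x := (cdf_eq_real μ x).symm

lemma quantileSet_nonempty {u : ℝ} (hu : u < 1) : {x : ℝ | u ≤ distFun μ x}.Nonempty := by
  obtain ⟨x, hx⟩ := ((tendsto_cdf_atTop μ).eventually (eventually_ge_nhds hu)).exists
  exact ⟨x, by rwa [mem_setOf_eq, distFun_eq_cdf]⟩

lemma quantileSet_bddBelow {u : ℝ} (hu : 0 < u) : BddBelow {x : ℝ | u ≤ distFun μ x} := by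
  obtain ⟨y, hy⟩ := ((tendsto_cdf_atBot μ).eventually (eventually_lt_nhds hu)).exists
  refine ⟨y, fun z hz => ?_⟩
  by_contra hlt
  push_neg at hlt
  have : distFun μ z ≤ cdf μ y := by
    rw [distFun_eq_cdf]; exact monotone_cdf μ hlt.le
  exact absurd (hz.trans this) (not_le.2 hy)

/-- Key Galois-type equivalence for the lower quantile. -/
lemma lowerQuantile_le_iff {u x : ℝ} (hu : 0 < u) (hu1 : u < 1) :
    lowerQuantile μ u ≤ x ↔ u ≤ distFun μ x := by
  constructor
  · intro h
    have key : ∀ z, x < z → u ≤ cdf μ z := by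
      intro z hz
      obtain ⟨w, hw, hwz⟩ := exists_lt_of_csInf_lt (quantileSet_nonempty hu1)
        (lt_of_le_of_lt h hz)
      rw [mem_setOf_eq, distFun_eq_cdf] at hw
      exact hw.trans (monotone_cdf μ hwz.le)
    rw [distFun_eq_cdf]
    have rc : Filter.Tendsto (cdf μ) (𝓝[>] x) (𝓝 (cdf μ x)) :=
      ((cdf μ).right_continuous x).tendsto.mono_left
        (nhdsWithin_mono x Ioi_subset_Ici_self)
    exact ge_of_tendsto rc (eventually_nhdsWithin_of_forall (fun z hz => key z hz))
  · intro h
    exact csInf_le (quantileSet_bddBelow hu) h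

lemma monotoneOn_lowerQuantile : MonotoneOn (lowerQuantile μ) (Ioo (0:ℝ) 1) := by
  intro u hu v hv huv
  exact csInf_le_csInf (quantileSet_bddBelow hu.1) (quantileSet_nonempty hv.2)
    (fun z hz => le_trans huv hz)

/-- The quantile transform: pushing forward Lebesgue measure on `(0,1)` by the
lower quantile function recovers `μ`. -/
lemma map_lowerQuantile :
    (volume.restrict (Ioo (0:ℝ) 1)).map (lowerQuantile μ) = μ := by
  have hQM : AEMeasurable (lowerQuantile μ) (volume.restrict (Ioo (0:ℝ) 1)) :=
    aemeasurable_restrict_of_monotoneOn measurableSet_Ioo monotoneOn_lowerQuantile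
  refine Measure.ext_of_Iic _ μ (fun x => ?_)
  rw [Measure.map_apply_of_aemeasurable hQM measurableSet_Iic,
    Measure.restrict_apply' measurableSet_Ioo]
  set t := distFun μ x with ht
  have ht0 : 0 ≤ t := ENNReal.toReal_nonneg
  have ht1 : t ≤ 1 := by
    rw [ht, distFun]
    exact ENNReal.toReal_le_of_le_ofReal one_pos.le (by simpa using prob_le_one)
  have hset : lowerQuantile μ ⁻¹' Iic x ∩ Ioo 0 1 = Iic t ∩ Ioo 0 1 := by
    ext u
    simp only [mem_inter_iff, mem_preimage, mem_Iic, mem_Ioo, and_congr_left_iff]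
    intro hu
    rw [lowerQuantile_le_iff hu.1 hu.2]
  rw [hset]
  have hIoc : volume (Ioc (0:ℝ) t) = ENNReal.ofReal t := by
    rw [Real.volume_Ioc, sub_zero]
  have hIoo : volume (Ioo (0:ℝ) t) = ENNReal.ofReal t := by
    rw [Real.volume_Ioo, sub_zero]
  have h1 : volume (Iic t ∩ Ioo (0:ℝ) 1) ≤ ENNReal.ofReal t := by
    rw [← hIoc]
    exact measure_mono (fun u hu => mem_Ioc.2 ⟨hu.2.1, hu.1⟩)
  have h2 : ENNReal.ofReal t ≤ volume (Iic t ∩ Ioo (0:ℝ) 1) := by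
    rw [← hIoo]
    exact measure_mono (fun u hu => ⟨le_of_lt hu.2, hu.1, lt_of_lt_of_le hu.2 ht1⟩)
  rw [le_antisymm h1 h2, ht, distFun, ENNReal.ofReal_toReal (measure_ne_top μ _)]

end Aux

/-- Cauchy–Schwarz for integrals against a constant. -/
lemma sq_integral_le {m : Measure ℝ} [IsFiniteMeasure m] {f : ℝ → ℝ}
    (hf : Integrable f m) (hf2 : Integrable (fun x => (f x)^2) m) :
    (∫ x, f x ∂m)^2 ≤ (m univ).toReal * ∫ x, (f x)^2 ∂m := by
  set M := (m univ).toReal with hM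
  rcases eq_or_lt_of_le (ENNReal.toReal_nonneg : (0:ℝ) ≤ M) with h0 | hMpos
  · have : m = 0 := by
      have := (ENNReal.toReal_eq_zero_iff _).1 h0.symm
      rcases this with h | h
      · exact Measure.measure_univ_eq_zero.1 h
      · exact absurd h (measure_ne_top m univ)
    simp [this]
  · set c := (∫ x, f x ∂m) / M with hc
    have hint1 : Integrable (fun x => (f x)^2 - (2*c) * f x) m := hf2.sub (hf.const_mul _)
    have hnn : 0 ≤ ∫ x, (f x - c)^2 ∂m :=
      integral_nonneg (fun x => sq_nonneg _)
    have hexp : ∫ x, (f x - c)^2 ∂m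
        = ∫ x, (f x)^2 ∂m - 2*c * ∫ x, f x ∂m + c^2 * M := by
      have heq : (fun x => (f x - c)^2) = fun x => ((f x)^2 - (2*c) * f x) + c^2 := by
        funext x; ring
      rw [heq, integral_add hint1 (integrable_const _),
        integral_sub hf2 (hf.const_mul _), integral_const_mul, integral_const]
      simp only [smul_eq_mul, measureReal_def, ← hM]
      ring
    have hfc : ∫ x, f x ∂m = c * M := by
      rw [hc]; exact (div_mul_cancel₀ _ (hMpos.ne' : M ≠ 0)).symm
    rw [hexp, hfc] at hnn
    have : c^2 * M ≤ ∫ x, (f x)^2 ∂m := by nlinarith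
    rw [hfc]
    nlinarith [sq_nonneg c, hMpos]

/-- Bounds on ES for standard measures. -/
lemma ES_bounds {μ : Measure ℝ} (hμ : μ ∈ stdMeasures) {α : ℝ} (hα : α ∈ Ioo (0:ℝ) 1) :
    0 ≤ ES μ α ∧ ES μ α ≤ Real.sqrt ((1 - α) / α) := by
  obtain ⟨hprob, hmean, hvar⟩ := hμ
  obtain ⟨hα0, hα1⟩ := hα
  set Q := lowerQuantile μ with hQdef
  set ν := volume.restrict (Ioo (0:ℝ) 1) with hν
  have hmap : ν.map Q = μ := map_lowerQuantile
  have hQM : AEMeasurable Q ν :=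
    aemeasurable_restrict_of_monotoneOn measurableSet_Ioo monotoneOn_lowerQuantile
  -- integrability of x and x² w.r.t. μ
  have hint2μ : Integrable (fun x : ℝ => x^2) μ := by
    by_contra h
    rw [integral_undef h] at hvar
    exact one_ne_zero hvar.symm
  have hintμ : Integrable (fun x : ℝ => x) μ := by
    have hg : Integrable (fun x : ℝ => (x^2 + 1)/2) μ :=
      (hint2μ.add (integrable_const 1)).div_const 2
    refine Integrable.mono' hg
      measurable_id.aestronglyMeasurable (ae_of_all _ (fun x => ?_))
    have h1 : ‖x‖ = |x| := rfl
    have h2 : |x|^2 = x^2 := sq_abs x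
    rw [h1]
    nlinarith [sq_nonneg (|x| - 1), abs_nonneg x]
  -- transfer to the quantile function
  have hsm1 : AEStronglyMeasurable (fun x : ℝ => x) (ν.map Q) :=
    measurable_id.aestronglyMeasurable
  have hsm2 : AEStronglyMeasurable (fun x : ℝ => x^2) (ν.map Q) :=
    (measurable_id.pow_const 2).aestronglyMeasurable
  have hQint : Integrable Q ν := by
    have := (integrable_map_measure hsm1 hQM).1 (by rwa [hmap])
    exact this
  have hQ2int : Integrable (fun u => (Q u)^2) ν := by
    have := (integrable_map_measure hsm2 hQM).1 (by rwa [hmap])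
    exact this
  have hQ0 : ∫ u, Q u ∂ν = 0 := by
    rw [← integral_map hQM hsm1, hmap]; exact hmean
  have hQ2 : ∫ u, (Q u)^2 ∂ν = 1 := by
    rw [← integral_map hQM hsm2, hmap]; exact hvar
  -- split the interval
  have hsub1 : Ioc (0:ℝ) α ⊆ Ioo (0:ℝ) 1 := fun u hu => ⟨hu.1, lt_of_le_of_lt hu.2 hα1⟩
  have hsub2 : Ioo α (1:ℝ) ⊆ Ioo (0:ℝ) 1 := fun u hu => ⟨lt_trans hα0 hu.1, hu.2⟩
  have hQIoo : IntegrableOn Q (Ioo (0:ℝ) 1) volume := hQint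
  have hQ2Ioo : IntegrableOn (fun u => (Q u)^2) (Ioo (0:ℝ) 1) volume := hQ2int
  have hQI1 : IntegrableOn Q (Ioc (0:ℝ) α) volume := hQIoo.mono_set hsub1
  have hQI2 : IntegrableOn Q (Ioo α (1:ℝ)) volume := hQIoo.mono_set hsub2
  have hQ2I1 : IntegrableOn (fun u => (Q u)^2) (Ioc (0:ℝ) α) volume := hQ2Ioo.mono_set hsub1
  have hQ2I2 : IntegrableOn (fun u => (Q u)^2) (Ioo α (1:ℝ)) volume := hQ2Ioo.mono_set hsub2
  have hunion : Ioc (0:ℝ) α ∪ Ioo α 1 = Ioo (0:ℝ) 1 :=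
    Ioc_union_Ioo_eq_Ioo hα0.le hα1
  have hdisj : Disjoint (Ioc (0:ℝ) α) (Ioo α 1) :=
    disjoint_left.2 fun u h1 h2 => absurd h1.2 (not_le.2 h2.1)
  set SI := ∫ u in Ioc (0:ℝ) α, Q u ∂volume with hSI
  set SJ := ∫ u in Ioo α (1:ℝ), Q u ∂volume with hSJ
  set A := ∫ u in Ioc (0:ℝ) α, (Q u)^2 ∂volume with hA
  set B := ∫ u in Ioo α (1:ℝ), (Q u)^2 ∂volume with hB
  have hSIJ : SI + SJ = 0 := by
    rw [hSI, hSJ, ← setIntegral_union hdisj measurableSet_Ioo hQI1 hQI2, hunion]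
    exact hQ0
  have hAB : A + B = 1 := by
    rw [hA, hB, ← setIntegral_union hdisj measurableSet_Ioo hQ2I1 hQ2I2, hunion]
    exact hQ2
  -- volume facts
  have hv1 : volume (Ioc (0:ℝ) α) = ENNReal.ofReal α := by rw [Real.volume_Ioc, sub_zero]
  have hv2 : volume (Ioo α (1:ℝ)) = ENNReal.ofReal (1 - α) := Real.volume_Ioo
  haveI hfin1 : IsFiniteMeasure (volume.restrict (Ioc (0:ℝ) α)) :=
    ⟨by rw [Measure.restrict_apply_univ, hv1]; exact ENNReal.ofReal_lt_top⟩
  haveI hfin2 : IsFiniteMeasure (volume.restrict (Ioo α (1:ℝ))) :=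
    ⟨by rw [Measure.restrict_apply_univ, hv2]; exact ENNReal.ofReal_lt_top⟩
  have hM1 : ((volume.restrict (Ioc (0:ℝ) α)) univ).toReal = α := by
    rw [Measure.restrict_apply_univ, hv1, ENNReal.toReal_ofReal hα0.le]
  have hM2 : ((volume.restrict (Ioo α (1:ℝ))) univ).toReal = 1 - α := by
    rw [Measure.restrict_apply_univ, hv2, ENNReal.toReal_ofReal (by linarith)]
  -- Cauchy-Schwarz on each piece
  have hCS1 : SI^2 ≤ α * A := by
    have := sq_integral_le hQI1 hQ2I1
    rwa [hM1] at this
  have hCS2 : SJ^2 ≤ (1 - α) * B := by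
    have := sq_integral_le hQI2 hQ2I2
    rwa [hM2] at this
  have hA0 : 0 ≤ A := integral_nonneg (fun u => sq_nonneg _)
  have hB0 : 0 ≤ B := integral_nonneg (fun u => sq_nonneg _)
  -- ES in terms of SI
  have hES : ES μ α = -(1/α) * SI := by
    rw [ES, intervalIntegral.integral_of_le hα0.le]
    have : ∫ u in Ioc (0:ℝ) α, VaR μ u ∂volume = ∫ u in Ioc (0:ℝ) α, -Q u ∂volume := rfl
    rw [this, integral_neg, hSI]
    ring
  -- monotonicity gives SI ≤ 0
  have hqmem : α ∈ Ioo (0:ℝ) 1 := ⟨hα0, hα1⟩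
  have hmono1 : SI ≤ α * Q α := by
    have h := setIntegral_mono_on (μ := volume) (s := Ioc (0:ℝ) α)
      (f := Q) (g := fun _ => Q α) hQI1 (integrableOn_const (by rw [hv1]; exact ENNReal.ofReal_ne_top))
      measurableSet_Ioc
      (fun u hu => monotoneOn_lowerQuantile (hsub1 hu) hqmem hu.2)
    rwa [setIntegral_const, measureReal_def, hv1, ENNReal.toReal_ofReal hα0.le, smul_eq_mul] at h
  have hmono2 : (1 - α) * Q α ≤ SJ := by
    have h := setIntegral_mono_on (μ := volume) (s := Ioo α (1:ℝ))
      (f := fun _ => Q α) (g := Q) (integrableOn_const (by rw [hv2]; exact ENNReal.ofReal_ne_top)) hQI2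
      measurableSet_Ioo
      (fun u hu => monotoneOn_lowerQuantile hqmem (hsub2 hu) hu.1.le)
    rwa [setIntegral_const, measureReal_def, hv2, ENNReal.toReal_ofReal (by linarith), smul_eq_mul] at h
  have hSIneg : SI ≤ 0 := by nlinarith
  constructor
  · rw [hES]
    have h1α : (0:ℝ) ≤ 1/α := by positivity
    nlinarith
  · -- upper bound
    have hSJneg : SJ = -SI := by linarith
    have hSJ2 : SJ^2 = SI^2 := by rw [hSJneg]; ring
    have e1 : (1-α)*SI^2 ≤ (1-α)*(α*A) := mul_le_mul_of_nonneg_left hCS1 (by linarith)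
    have e2 : α*SI^2 ≤ α*((1-α)*B) := by
      have h := mul_le_mul_of_nonneg_left hCS2 hα0.le
      rwa [hSJ2] at h
    have e3 : (1-α)*(α*A) + α*((1-α)*B) = α*(1-α) := by
      rw [show (1-α)*(α*A) + α*((1-α)*B) = α*(1-α)*(A+B) from by ring, hAB, mul_one]
    have hSI2 : SI^2 ≤ α * (1 - α) := by nlinarith [e1, e2, e3]
    set K := Real.sqrt ((1 - α) / α) with hK
    have hK0 : 0 ≤ K := Real.sqrt_nonneg _
    have hK2 : K^2 = (1 - α) / α := Real.sq_sqrt (div_nonneg (by linarith) hα0.le)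
    have hαK2 : α * K^2 = 1 - α := by rw [hK2]; field_simp
    have hαK : 0 ≤ α * K := mul_nonneg hα0.le hK0
    have hsq : (-SI)^2 ≤ (α*K)^2 := by
      have h' : (α*K)^2 = α * (α * K^2) := by ring
      rw [h', hαK2]
      calc (-SI)^2 = SI^2 := by ring
      _ ≤ α*(1-α) := hSI2
    have hneg : -SI ≤ α * K :=
      le_trans (le_abs_self _)
        (by rw [← Real.sqrt_sq_eq_abs, ← Real.sqrt_sq hαK]; exact Real.sqrt_le_sqrt hsq)
    rw [hES]
    have heq : -(1/α) * SI = (-SI) / α := by ring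
    rw [heq, div_le_iff₀ hα0]
    calc -SI ≤ α * K := hneg
    _ = K * α := mul_comm _ _

/-- The two point measure with mass `1/(1+s²)` at `-s` and `s²/(1+s²)` at `1/s`. -/
noncomputable def twoPoint (s : ℝ) : Measure ℝ :=
  (ENNReal.ofReal (1/(1+s^2))) • Measure.dirac (-s)
    + (ENNReal.ofReal (s^2/(1+s^2))) • Measure.dirac (1/s)


lemma integrable_dirac_of_measurable {f : ℝ → ℝ} (hf : Measurable f) (a : ℝ) :
    Integrable f (Measure.dirac a) := by
  refine ⟨hf.aestronglyMeasurable, ?_⟩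
  simp [HasFiniteIntegral, lintegral_dirac]

lemma twoPoint_integral {s : ℝ} (hs : 0 < s) {f : ℝ → ℝ} (hf : Measurable f) :
    ∫ x, f x ∂(twoPoint s) = (1/(1+s^2)) * f (-s) + (s^2/(1+s^2)) * f (1/s) := by
  have h1 : (0:ℝ) ≤ 1/(1+s^2) := by positivity
  have h2 : (0:ℝ) ≤ s^2/(1+s^2) := by positivity
  rw [twoPoint, integral_add_measure
    (((integrable_dirac_of_measurable hf (-s))).smul_measure ENNReal.ofReal_ne_top)
    (((integrable_dirac_of_measurable hf (1/s))).smul_measure ENNReal.ofReal_ne_top),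
    integral_smul_measure, integral_smul_measure, integral_dirac, integral_dirac,
    ENNReal.toReal_ofReal h1, ENNReal.toReal_ofReal h2, smul_eq_mul, smul_eq_mul]

lemma distFun_twoPoint {s : ℝ} (hs : 0 < s) (x : ℝ) :
    distFun (twoPoint s) x =
      if 1/s ≤ x then 1 else if -s ≤ x then 1/(1+s^2) else 0 := by
  have h1 : (0:ℝ) ≤ 1/(1+s^2) := by positivity
  have h2 : (0:ℝ) ≤ s^2/(1+s^2) := by positivity
  have hlt : -s < 1/s := by
    calc -s < 0 := by linarith
    _ < 1/s := by positivity
  rw [distFun, twoPoint]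
  simp only [Measure.coe_add, Measure.coe_smul, Pi.add_apply, Pi.smul_apply,
    Measure.dirac_apply, smul_eq_mul]
  by_cases hx1 : 1/s ≤ x
  · have hx2 : -s ≤ x := le_trans hlt.le hx1
    rw [if_pos hx1]
    rw [indicator_of_mem (mem_Iic.2 hx2), indicator_of_mem (mem_Iic.2 hx1)]
    simp only [Pi.one_apply, mul_one]
    rw [← ENNReal.ofReal_add h1 h2, ENNReal.toReal_ofReal (by linarith)]
    have : 1/(1+s^2) + s^2/(1+s^2) = 1 := by field_simp
    rw [this]
  · rw [if_neg hx1, indicator_of_notMem (fun h => hx1 (mem_Iic.1 h))]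
    by_cases hx2 : -s ≤ x
    · rw [if_pos hx2, indicator_of_mem (mem_Iic.2 hx2)]
      simp only [Pi.one_apply, mul_one, mul_zero, add_zero]
      exact ENNReal.toReal_ofReal h1
    · rw [if_neg hx2, indicator_of_notMem (fun h => hx2 (mem_Iic.1 h))]
      simp

lemma twoPoint_mem_std {s : ℝ} (hs : 0 < s) : twoPoint s ∈ stdMeasures := by
  have h1 : (0:ℝ) ≤ 1/(1+s^2) := by positivity
  have h2 : (0:ℝ) ≤ s^2/(1+s^2) := by positivity
  have hs2 : s ≠ 0 := hs.ne'
  refine ⟨⟨?_⟩, ?_, ?_⟩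
  · rw [twoPoint]
    simp only [Measure.coe_add, Measure.coe_smul, Pi.add_apply, Pi.smul_apply,
      measure_univ, smul_eq_mul, mul_one]
    rw [← ENNReal.ofReal_add h1 h2]
    have : 1/(1+s^2) + s^2/(1+s^2) = 1 := by field_simp
    rw [this, ENNReal.ofReal_one]
  · rw [twoPoint_integral hs (measurable_id' : Measurable (fun x : ℝ => x))]
    field_simp
    ring
  · rw [twoPoint_integral hs ((measurable_id' : Measurable (fun x : ℝ => x)).pow_const 2)]
    have : (1/s)^2 = 1/s^2 := by field_simp
    rw [this]
    field_simp
    ring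

lemma ES_twoPoint {s α : ℝ} (hs : 0 < s) (hα : 0 < α) (hα' : α ≤ 1/(1+s^2)) :
    ES (twoPoint s) α = s := by
  have hq : ∀ u ∈ Ioc (0:ℝ) α, VaR (twoPoint s) u = s := by
    intro u hu
    have hset : {x : ℝ | u ≤ distFun (twoPoint s) x} = Ici (-s) := by
      ext x
      rw [mem_setOf_eq, distFun_twoPoint hs, mem_Ici]
      have hu1 : u ≤ 1/(1+s^2) := le_trans hu.2 hα'
      have hu0 : 0 < u := hu.1
      have hlt : -s < 1/s := by
        calc -s < 0 := by linarith
        _ < 1/s := by positivity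
      constructor
      · intro h
        by_contra hx
        push_neg at hx
        rw [if_neg (by linarith [hlt] : ¬ 1/s ≤ x), if_neg (not_le.2 hx)] at h
        linarith
      · intro h
        by_cases hx1 : 1/s ≤ x
        · rw [if_pos hx1]
          have : (0:ℝ) < 1 + s^2 := by positivity
          calc u ≤ 1/(1+s^2) := hu1
          _ ≤ 1 := by rw [div_le_one this]; nlinarith
        · rw [if_neg hx1, if_pos h]
          exact hu1
    rw [VaR, lowerQuantile, hset, csInf_Ici, neg_neg]
  rw [ES, intervalIntegral.integral_of_le hα.le,
    setIntegral_congr_fun measurableSet_Ioc hq, setIntegral_const,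
    measureReal_def, Real.volume_Ioc, sub_zero, ENNReal.toReal_ofReal hα.le, smul_eq_mul]
  field_simp

/-- The extremal Expected Shortfalls over the class of standard probability
measures: `inf_μ ES_α(μ) = 0` and `sup_μ ES_α(μ) = √((1-α)/α)`. -/
theorem extremal_expected_shortfall_std (α : ℝ) (hα : α ∈ Ioo (0 : ℝ) 1) :
    sInf ((fun μ : Measure ℝ => ES μ α) '' stdMeasures) = 0 ∧
    sSup ((fun μ : Measure ℝ => ES μ α) '' stdMeasures) =
      Real.sqrt ((1 - α) / α) := by
  obtain ⟨hα0, hα1⟩ := hα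
  set T := (fun μ : Measure ℝ => ES μ α) '' stdMeasures with hT
  set s₀ := Real.sqrt ((1 - α) / α) with hs₀
  have hs₀pos : 0 < s₀ := Real.sqrt_pos.2 (div_pos (by linarith) hα0)
  have hs₀sq : s₀^2 = (1 - α)/α := Real.sq_sqrt (div_nonneg (by linarith) hα0.le)
  have hcond : α ≤ 1/(1 + s₀^2) := by
    rw [hs₀sq, show 1 + (1 - α)/α = 1/α from by field_simp; ring, one_div_one_div]
  have hmem : ES (twoPoint s₀) α = s₀ := ES_twoPoint hs₀pos hα0 hcond
  have hs₀T : s₀ ∈ T := ⟨twoPoint s₀, twoPoint_mem_std hs₀pos, hmem⟩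
  have hne : T.Nonempty := ⟨s₀, hs₀T⟩
  have hub : ∀ y ∈ T, y ≤ s₀ := by
    rintro y ⟨μ, hμ, rfl⟩
    exact (ES_bounds hμ ⟨hα0, hα1⟩).2
  have hlb : ∀ y ∈ T, 0 ≤ y := by
    rintro y ⟨μ, hμ, rfl⟩
    exact (ES_bounds hμ ⟨hα0, hα1⟩).1
  constructor
  · refine le_antisymm ?_ (le_csInf hne hlb)
    refine le_of_forall_pos_le_add (fun ε hε => ?_)
    have ht0 : 0 < min ε s₀ := lt_min hε hs₀pos
    have htcond : α ≤ 1/(1 + (min ε s₀)^2) := by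
      refine le_trans hcond (one_div_le_one_div_of_le (by positivity) ?_)
      have : (min ε s₀)^2 ≤ s₀^2 :=
        pow_le_pow_left₀ ht0.le (min_le_right _ _) 2
      linarith
    have hEt : ES (twoPoint (min ε s₀)) α = min ε s₀ := ES_twoPoint ht0 hα0 htcond
    have hmemT : min ε s₀ ∈ T := ⟨_, twoPoint_mem_std ht0, hEt⟩
    calc sInf T ≤ min ε s₀ := csInf_le ⟨0, hlb⟩ hmemT
    _ ≤ ε := min_le_left _ _
    _ ≤ 0 + ε := by linarith
  · exact le_antisymm (csSup_le hne hub) (le_csSup ⟨s₀, hub⟩ hs₀T)
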